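/- Let (u_j)_{j∈ℕ} be a sequence of vectors in ℝ^n with u_j > 0 entrywise and ‖u_j‖ = 1 for all j, and suppose there exists c ∈ ℝ with λ(u_j) ≥ c for all j. If u_j converges to a vector v as j → ∞, then v > 0 entrywise. -/

import Mathlib

open Matrix Finset

noncomputable def enorm {n : ℕ} (u : Fin n → ℝ) : ℝ := Real.sqrt (∑ i, u i ^ 2)

def IsZMatrix {n : ℕ} (B : Matrix (Fin n) (Fin n) ℝ) : Prop :=
  ∀ i j, i ≠ j → B i j ≤ 0

def IsIrreducibleMat {n : ℕ} (B : Matrix (Fin n) (Fin n) ℝ) : Prop :=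
  ¬ ∃ S : Finset (Fin n), S.Nonempty ∧ S ≠ Finset.univ ∧
    ∀ i ∈ S, ∀ j ∉ S, B i j = 0

def IsNonsingularM {n : ℕ} (B : Matrix (Fin n) (Fin n) ℝ) : Prop :=
  IsZMatrix B ∧ IsUnit B ∧ ∀ i j, 0 ≤ B⁻¹ i j

noncomputable def calA {n : ℕ} (A : Matrix (Fin n) (Fin n) ℝ) (Γ : ℝ) (a : Fin n → ℝ)
    (u : Fin n → ℝ) : Matrix (Fin n) (Fin n) ℝ :=
  A + Γ • Matrix.diagonal (fun i => 1 - 1 / (a i + u i ^ 2))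

noncomputable def rvec {n : ℕ} (A : Matrix (Fin n) (Fin n) ℝ) (Γ : ℝ) (a : Fin n → ℝ)
    (u : Fin n → ℝ) (lam : ℝ) : Fin n → ℝ :=
  calA A Γ a u *ᵥ u - lam • u

noncomputable def Jmat {n : ℕ} (A : Matrix (Fin n) (Fin n) ℝ) (Γ : ℝ) (a : Fin n → ℝ)
    (u : Fin n → ℝ) (lam : ℝ) : Matrix (Fin n) (Fin n) ℝ :=
  A + (Γ - lam) • (1 : Matrix (Fin n) (Fin n) ℝ)
    - Γ • Matrix.diagonal (fun i => (a i - u i ^ 2) / (a i + u i ^ 2) ^ 2)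

noncomputable def lamOf {n : ℕ} [NeZero n] (A : Matrix (Fin n) (Fin n) ℝ) (Γ : ℝ)
    (a : Fin n → ℝ) (u : Fin n → ℝ) : ℝ :=
  ⨅ i, (calA A Γ a u *ᵥ u) i / u i

def NewtonSystem {n : ℕ} (A : Matrix (Fin n) (Fin n) ℝ) (Γ : ℝ) (a : Fin n → ℝ)
    (u : Fin n → ℝ) (lam : ℝ) (Δ : Fin n → ℝ) (δ : ℝ) : Prop :=
  Jmat A Γ a u lam *ᵥ Δ - δ • u = -rvec A Γ a u lam ∧
  -(u ⬝ᵥ Δ) = -(1/2 * (u ⬝ᵥ u - 1))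

set_option maxHeartbeats 1000000 in
theorem stmt_12 {n : ℕ} [NeZero n] (A : Matrix (Fin n) (Fin n) ℝ) (a : Fin n → ℝ) (Γ : ℝ)
    (ha : ∀ i, 0 < a i) (hΓ : 0 < Γ)
    (hA : IsNonsingularM A) (hAirr : IsIrreducibleMat A)
    (u : ℕ → Fin n → ℝ)
    (hu : ∀ j, ∀ i, 0 < u j i) (hnorm : ∀ j, _root_.enorm (u j) = 1)
    (c : ℝ) (hc : ∀ j, c ≤ lamOf A Γ a (u j))
    (v : Fin n → ℝ) (hconv : Filter.Tendsto u Filter.atTop (nhds v)) :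
    ∀ i, 0 < v i := by
  classical
  have htend : ∀ i, Filter.Tendsto (fun j => u j i) Filter.atTop (nhds (v i)) :=
    fun i => ((continuous_apply i).tendsto v).comp hconv
  have hvnn : ∀ i, 0 ≤ v i := fun i => ge_of_tendsto' (htend i) (fun j => (hu j i).le)
  have hsum : ∑ i, v i ^ 2 = 1 := by
    have h1 : ∀ j, ∑ i, (u j i) ^ 2 = 1 := by
      intro j
      have h := hnorm j
      unfold _root_.enorm at h
      nlinarith [Real.sq_sqrt (show (0:ℝ) ≤ ∑ i, u j i ^ 2 from
        Finset.sum_nonneg fun i _ => sq_nonneg _)]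
    have h2 : Filter.Tendsto (fun j => ∑ i, (u j i) ^ 2) Filter.atTop (nhds (∑ i, v i ^ 2)) :=
      tendsto_finset_sum _ fun i _ => (htend i).pow 2
    have h3 : Filter.Tendsto (fun j => ∑ i, (u j i) ^ 2) Filter.atTop (nhds 1) := by
      simpa [h1] using (tendsto_const_nhds : Filter.Tendsto (fun _ : ℕ => (1:ℝ)) _ _)
    exact tendsto_nhds_unique h2 h3
  have hvpos : ∃ i, 0 < v i := by
    by_contra h
    push_neg at h
    have hz : ∀ i, v i = 0 := fun i => le_antisymm (h i) (hvnn i)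
    simp [hz] at hsum
  have expand : ∀ (w : Fin n → ℝ) (i : Fin n), (calA A Γ a w *ᵥ w) i =
      ∑ k, (A i k + Γ * (if i = k then (1 - 1 / (a i + w i ^ 2)) else 0)) * w k := by
    intro w i
    simp [calA, Matrix.mulVec, dotProduct, Matrix.add_apply,
      Matrix.diagonal_apply, smul_eq_mul]
  have hkey : ∀ i, c * v i ≤ (calA A Γ a v *ᵥ v) i := by
    intro i
    have hineq : ∀ j, c * u j i ≤ (calA A Γ a (u j) *ᵥ u j) i := by
      intro j
      have h1 : lamOf A Γ a (u j) ≤ (calA A Γ a (u j) *ᵥ u j) i / u j i :=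
        ciInf_le (Set.Finite.bddBelow (Set.finite_range _)) i
      have h2 : c ≤ (calA A Γ a (u j) *ᵥ u j) i / u j i := le_trans (hc j) h1
      calc c * u j i ≤ ((calA A Γ a (u j) *ᵥ u j) i / u j i) * u j i :=
            mul_le_mul_of_nonneg_right h2 (hu j i).le
        _ = (calA A Γ a (u j) *ᵥ u j) i := div_mul_cancel₀ _ (hu j i).ne'
    have hlhs : Filter.Tendsto (fun j => c * u j i) Filter.atTop (nhds (c * v i)) :=
      (htend i).const_mul c
    have hrhs : Filter.Tendsto (fun j => (calA A Γ a (u j) *ᵥ u j) i) Filter.atTop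
        (nhds ((calA A Γ a v *ᵥ v) i)) := by
      simp only [expand]
      refine tendsto_finset_sum _ fun k _ => ?_
      have hden : Filter.Tendsto (fun j => a i + (u j i) ^ 2) Filter.atTop
          (nhds (a i + v i ^ 2)) := tendsto_const_nhds.add ((htend i).pow 2)
      have hdpos : (0:ℝ) < a i + v i ^ 2 := add_pos_of_pos_of_nonneg (ha i) (sq_nonneg _)
      have hinv : Filter.Tendsto (fun j => 1 / (a i + (u j i) ^ 2)) Filter.atTop
          (nhds (1 / (a i + v i ^ 2))) := by
        exact tendsto_const_nhds.div hden hdpos.ne'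
      have hfac : Filter.Tendsto
          (fun j => A i k + Γ * (if i = k then (1 - 1 / (a i + (u j i) ^ 2)) else 0))
          Filter.atTop
          (nhds (A i k + Γ * (if i = k then (1 - 1 / (a i + v i ^ 2)) else 0))) := by
        by_cases hik : i = k
        · subst hik
          simp only [if_pos rfl]
          exact tendsto_const_nhds.add ((tendsto_const_nhds.sub hinv).const_mul Γ)
        · simp only [if_neg hik]
          exact tendsto_const_nhds
      exact hfac.mul (htend k)
    exact le_of_tendsto_of_tendsto' hlhs hrhs hineq
  by_contra hcon
  push_neg at hcon
  obtain ⟨i0, hi0⟩ := hcon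
  have hvi0 : v i0 = 0 := le_antisymm hi0 (hvnn i0)
  set S : Finset (Fin n) := Finset.univ.filter (fun i => v i = 0) with hS
  have hmemS : ∀ i, i ∈ S ↔ v i = 0 := by
    intro i; simp [hS]
  apply hAirr
  refine ⟨S, ⟨i0, (hmemS i0).mpr hvi0⟩, ?_, ?_⟩
  · obtain ⟨i1, hi1⟩ := hvpos
    intro hEq
    have : i1 ∈ S := hEq ▸ Finset.mem_univ i1
    rw [hmemS] at this
    exact absurd this hi1.ne'
  · intro i hiS j hjS
    have hvi : v i = 0 := (hmemS i).mp hiS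
    have hvj : v j ≠ 0 := fun h => hjS ((hmemS j).mpr h)
    have hsum0 : (calA A Γ a v *ᵥ v) i = ∑ k, A i k * v k := by
      rw [expand]
      refine Finset.sum_congr rfl fun k _ => ?_
      by_cases hik : i = k
      · subst hik; simp [hvi]
      · simp [hik]
    have hge : (0:ℝ) ≤ ∑ k, A i k * v k := by
      have := hkey i
      rw [hvi, mul_zero, hsum0] at this
      exact this
    have hnp : ∀ k ∈ Finset.univ, A i k * v k ≤ 0 := by
      intro k _
      by_cases hik : i = k
      · subst hik; simp [hvi]
      · exact mul_nonpos_of_nonpos_of_nonneg (hA.1 i k hik) (hvnn k)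
    have hzero : ∑ k, A i k * v k = 0 :=
      le_antisymm (Finset.sum_nonpos hnp) hge
    have heach : A i j * v j = 0 := by
      have := (Finset.sum_eq_zero_iff_of_nonpos hnp).mp hzero j (Finset.mem_univ j)
      exact this
    exact (mul_eq_zero.mp heach).resolve_right hvj
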